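/- Let q be a prime power with char(F_q) > 3 and let r > 2 be a natural number with gcd(r, q − 1) = 1. Then the monomial P(x) = xʳ ∈ F_q[x] is a Sidon polynomial over F_q × F_q. -/
import Mathlib


open Polynomial

/-- A subset `A` of an abelian group is a Sidon set if whenever
`a₁ - a₂ = a₃ - a₄` with all four elements in `A`, then `{a₁, a₄} = {a₂, a₃}`. -/
def IsSidon {G : Type*} [AddCommGroup G] (A : Set G) : Prop :=
  ∀ a₁ ∈ A, ∀ a₂ ∈ A, ∀ a₃ ∈ A, ∀ a₄ ∈ A,
    a₁ - a₂ = a₃ - a₄ → ({a₁, a₄} : Set G) = {a₂, a₃}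

/-- The set `(P,Q) = {(P(x), Q(x)) : x ∈ F}`. -/
def polyGraph {F : Type*} [Field F] (P Q : F[X]) : Set (F × F) :=
  Set.range fun x : F => (P.eval x, Q.eval x)

/-- A maximum Sidon set over `F × F`: a Sidon set with exactly `|F|` elements. -/
def IsMaxSidon {F : Type*} [Field F] [Fintype F] (A : Set (F × F)) : Prop :=
  IsSidon A ∧ A.ncard = Fintype.card F

/-- A polynomial `P` is Sidon if there is `Q` with `(P,Q)` a maximum Sidon set. -/
def IsSidonPoly {F : Type*} [Field F] [Fintype F] (P : F[X]) : Prop :=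
  ∃ Q : F[X], IsMaxSidon (polyGraph P Q)

/-- A permutation polynomial: its evaluation map is a bijection of `F`. -/
def IsPermPoly {F : Type*} [Field F] (R : F[X]) : Prop :=
  Function.Bijective fun x : F => R.eval x

/-- Sidon equivalence: `P' = R ∘ P ∘ T` (as functions on `F`)
for permutation polynomials `R`, `T`. -/
def SidonEquiv {F : Type*} [Field F] (P P' : F[X]) : Prop :=
  ∃ R T : F[X], IsPermPoly R ∧ IsPermPoly T ∧
    ∀ x : F, P'.eval x = R.eval (P.eval (T.eval x))

lemma pow_surj_aux {F : Type*} [Field F] [Fintype F] (r : ℕ) (hr : 0 < r)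
    (hcop : Nat.Coprime r (Fintype.card F - 1)) :
    Function.Surjective fun x : F => x ^ r := by
  classical
  intro y
  rcases eq_or_ne y 0 with rfl | hy
  · exact ⟨0, by simp [hr.ne']⟩
  · have hc : (Nat.card Fˣ).Coprime r := by
      rw [Nat.card_eq_fintype_card, Fintype.card_units]
      exact hcop.symm
    obtain ⟨u, hu⟩ := (powCoprime hc).surjective (Units.mk0 y hy)
    exact ⟨u, by simpa [powCoprime, Units.ext_iff] using congrArg (Units.val) hu⟩

lemma parabola_sidon {F : Type*} [Field F] (h2 : (2 : F) ≠ 0) :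
    IsSidon (Set.range fun y : F => (y, y ^ 2)) := by
  rintro _ ⟨a, rfl⟩ _ ⟨b, rfl⟩ _ ⟨c, rfl⟩ _ ⟨d, rfl⟩ h
  simp only [Prod.ext_iff, Prod.mk_sub_mk] at h
  obtain ⟨h1, hsq⟩ := h
  rcases eq_or_ne a b with rfl | hab
  · have hcd : c = d := by linear_combination -h1
    subst hcd
    ext p; simp [Set.mem_insert_iff, Set.mem_singleton_iff]
    try tauto
  · have hfac : (a - b) * (a + b) = (c - d) * (c + d) := by
      linear_combination hsq
    have hab' : a - b ≠ 0 := sub_ne_zero.mpr hab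
    have hsum : a + b = c + d := by
      have := hfac
      rw [← h1] at this
      exact mul_left_cancel₀ hab' this
    have hac : a = c := by
      have h2a : 2 * a = 2 * c := by linear_combination h1 + hsum
      exact mul_left_cancel₀ h2 h2a
    have hbd : b = d := by
      subst hac
      linear_combination -h1
    subst hac; subst hbd
    ext p; simp [Set.mem_insert_iff, Set.mem_singleton_iff]; tauto

theorem stmt_12 {F : Type*} [Field F] [Fintype F] (hchar : 3 < ringChar F)
    (r : ℕ) (hr : 2 < r) (hcop : Nat.Coprime r (Fintype.card F - 1)) :
    IsSidonPoly ((X : F[X]) ^ r) := by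
  classical
  refine ⟨(X : F[X]) ^ (2 * r), ?_, ?_⟩
  all_goals
    have hsurj := pow_surj_aux (F := F) r (by omega) hcop
    have hgraph : polyGraph ((X : F[X]) ^ r) ((X : F[X]) ^ (2 * r)) =
        Set.range fun y : F => (y, y ^ 2) := by
      unfold polyGraph
      ext p
      simp only [Set.mem_range, eval_pow, eval_X]
      constructor
      · rintro ⟨x, rfl⟩
        exact ⟨x ^ r, by rw [← pow_mul, mul_comm, pow_mul]⟩
      · rintro ⟨y, rfl⟩
        obtain ⟨x, hx⟩ := hsurj y
        refine ⟨x, ?_⟩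
        simp only at hx
        rw [mul_comm, pow_mul, hx]
  · rw [hgraph]
    have h2 : (2 : F) ≠ 0 := by
      have : ringChar F ≠ 2 := by omega
      exact Ring.two_ne_zero this
    exact parabola_sidon h2
  · rw [hgraph]
    have hinj : Function.Injective fun y : F => (y, y ^ 2) := by
      intro a b hab
      exact (Prod.ext_iff.mp hab).1
    rw [show (Set.range fun y : F => (y, y ^ 2)) = (fun y : F => (y, y ^ 2)) '' Set.univ by
      rw [Set.image_univ]]
    rw [Set.ncard_image_of_injective _ hinj, Set.ncard_univ, Nat.card_eq_fintype_card]
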